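/- arXiv:math/0409181 — 4 statements merged into one kernel-verified Lean document; each statement's English description precedes it below -/
import Mathlib

section
/- Let u(x) = c·exp(iρx) be an eigenfunction and v(x) = d·exp(iρ̄(x−1)) its biorthogonal function with (u,v)_{L²(0,1)} = c·d̄·exp(iρ) = 1, where Im ρ ≥ 0. Then the rank-one projector P(f) = (f,v)·u on L²(0,1) has norm ‖P‖ = |c|·|d|·‖exp(iρ·)‖·‖exp(iρ̄(·−1))‖, and this norm satisfies the two-sided estimate ‖P‖ ≍ exp(Im ρ)/(1+Im ρ) with absolute constants. -/
open Complex MeasureTheory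

lemma int_exp_Ioo (k : ℝ) (hk : k ≠ 0) :
    ∫ x in Set.Ioo (0:ℝ) 1, Real.exp (k*x) = (Real.exp k - 1)/k := by
  rw [← integral_Ioc_eq_integral_Ioo, ← intervalIntegral.integral_of_le zero_le_one]
  have D : ∀ x ∈ Set.uIcc (0:ℝ) 1, HasDerivAt (fun y : ℝ => Real.exp (k*y)/k)
      (Real.exp (k*x)) x := by
    intro x _
    have h1 : HasDerivAt (fun y : ℝ => k*y) k x := by
      simpa using (hasDerivAt_id x).const_mul k
    have := ((Real.hasDerivAt_exp (k*x)).comp x h1).div_const k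
    rw [mul_div_cancel_right₀ _ hk] at this; exact this
  rw [intervalIntegral.integral_eq_sub_of_hasDerivAt D
    ((Real.continuous_exp.comp (continuous_const.mul continuous_id)).intervalIntegrable 0 1)]
  simp [sub_div]

lemma key_aux (t : ℝ) (ht : 0 ≤ t) : ∃ A : ℝ,
    (∫ x in Set.Ioo (0:ℝ) 1, Real.exp (-(2*t)*x)) = A ∧
    (∫ x in Set.Ioo (0:ℝ) 1, Real.exp (2*t*(x-1))) = A ∧
    1/(4*(1+t)) ≤ A ∧ A ≤ 2/(1+t) := by
  rcases ht.eq_or_lt with h0 | ht'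
  · subst h0
    refine ⟨1, ?_, ?_, by norm_num, by norm_num⟩ <;> simp
  · have h2t : (2*t) ≠ 0 := by positivity
    have hEpos0 : 0 < Real.exp (-(2*t)) := Real.exp_pos _
    have hE1 : Real.exp (-(2*t)) * (1+2*t) ≤ 1 := by
      have h := Real.add_one_le_exp (2*t)
      calc Real.exp (-(2*t)) * (1+2*t) ≤ Real.exp (-(2*t)) * Real.exp (2*t) := by nlinarith
        _ = 1 := by rw [← Real.exp_add]; simp
    have hE2 : 1 - 2*t ≤ Real.exp (-(2*t)) := by
      have := Real.add_one_le_exp (-(2*t)); linarith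
    have hEpos : 0 < Real.exp (-(2*t)) := Real.exp_pos _
    refine ⟨(1 - Real.exp (-(2*t)))/(2*t), ?_, ?_, ?_, ?_⟩
    · rw [int_exp_Ioo _ (neg_ne_zero.mpr h2t)]
      rw [div_eq_div_iff (by simpa using h2t) (by positivity)]
      ring
    · have : ∀ x : ℝ, Real.exp (2*t*(x-1)) = Real.exp ((2*t)*x) * Real.exp (-(2*t)) := by
        intro x; rw [← Real.exp_add]; ring_nf
      simp_rw [this]
      rw [integral_mul_const, int_exp_Ioo _ h2t, Real.exp_neg]
      have he : (0:ℝ) < Real.exp (2*t) := Real.exp_pos _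
      rw [div_mul_eq_mul_div, sub_mul, mul_inv_cancel₀ he.ne', one_mul]
    · rw [div_le_div_iff₀ (by positivity) (by positivity)]
      nlinarith [sq_nonneg t, mul_pos ht' ht']
    · rw [div_le_div_iff₀ (by positivity) (by positivity)]
      rcases le_total t 1 with h | h
      · nlinarith
      · nlinarith

lemma norm_toLp_two {α : Type*} [MeasurableSpace α] {μ : Measure α} {f : α → ℂ}
    (hf : MemLp f 2 μ) : ‖hf.toLp f‖ = Real.sqrt (∫ a, ‖f a‖^2 ∂μ) := by
  rw [Lp.norm_toLp, hf.eLpNorm_eq_integral_rpow_norm (by norm_num) (by norm_num)]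
  rw [ENNReal.toReal_ofReal (by positivity)]
  rw [Real.sqrt_eq_rpow]
  norm_num

lemma norm_u (ρ c : ℂ) (hu : MemLp (fun x : ℝ => c * Complex.exp (Complex.I * ρ * x)) 2
      (volume.restrict (Set.Ioo (0:ℝ) 1))) :
    ‖hu.toLp _‖ = Real.sqrt (‖c‖^2 * ∫ x in Set.Ioo (0:ℝ) 1, Real.exp (-(2*ρ.im)*x)) := by
  rw [norm_toLp_two, ← integral_const_mul]
  congr 1
  refine integral_congr_ae (Filter.Eventually.of_forall fun x => ?_)
  beta_reduce
  rw [norm_mul, mul_pow, Complex.norm_exp]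
  congr 1
  rw [← Real.exp_nat_mul]
  congr 1
  simp [Complex.mul_re]
  ring

lemma norm_v (ρ d : ℂ) (hv : MemLp (fun x : ℝ =>
      d * Complex.exp (Complex.I * ((starRingEnd ℂ) ρ) * (x - 1))) 2
      (volume.restrict (Set.Ioo (0:ℝ) 1))) :
    ‖hv.toLp _‖ = Real.sqrt (‖d‖^2 * ∫ x in Set.Ioo (0:ℝ) 1, Real.exp (2*ρ.im*(x-1))) := by
  rw [norm_toLp_two, ← integral_const_mul]
  congr 1
  refine integral_congr_ae (Filter.Eventually.of_forall fun x => ?_)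
  beta_reduce
  rw [norm_mul, mul_pow, Complex.norm_exp]
  congr 1
  rw [← Real.exp_nat_mul]
  congr 1
  simp [Complex.mul_re, Complex.sub_re, Complex.sub_im]
  ring

/-- For `u(x) = c·exp(iρx)`, `v(x) = d·exp(iρ̄(x−1))` in L²(0,1) with
`(u,v) = c·d̄·exp(iρ) = 1` and `Im ρ ≥ 0`, the rank-one projector `P f = (f,v)·u`
has norm `‖P‖ = ‖u‖·‖v‖ ( = |c|·|d|·‖exp(iρ·)‖·‖exp(iρ̄(·−1))‖ )`, and
`‖P‖ ≍ exp(Im ρ)/(1+Im ρ)` with absolute constants. -/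
theorem stmt5 :
    ∃ C₁ C₂ : ℝ, 0 < C₁ ∧ 0 < C₂ ∧
      ∀ (ρ c d : ℂ), 0 ≤ ρ.im → c ≠ 0 → d ≠ 0 →
        c * (starRingEnd ℂ) d * Complex.exp (Complex.I * ρ) = 1 →
        ∀ (hu : MemLp (fun x : ℝ => c * Complex.exp (Complex.I * ρ * x)) 2
              (volume.restrict (Set.Ioo (0:ℝ) 1)))
          (hv : MemLp (fun x : ℝ =>
                d * Complex.exp (Complex.I * ((starRingEnd ℂ) ρ) * (x - 1))) 2
              (volume.restrict (Set.Ioo (0:ℝ) 1))),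
        let u := hu.toLp _
        let v := hv.toLp _
        let P := (innerSL ℂ v).smulRight u
        ‖P‖ = ‖u‖ * ‖v‖ ∧
          C₁ * Real.exp ρ.im / (1 + ρ.im) ≤ ‖P‖ ∧
          ‖P‖ ≤ C₂ * Real.exp ρ.im / (1 + ρ.im) := by
  refine ⟨1/4, 2, by norm_num, by norm_num, ?_⟩
  intro ρ c d ht hc hd hcd hu hv u v P
  set t := ρ.im with htdef
  obtain ⟨A, hA1, hA2, hAlo, hAhi⟩ := key_aux t ht
  have h1t : (0:ℝ) < 1 + t := by linarith
  have hA0 : 0 ≤ A := le_trans (by positivity) hAlo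
  have hPnorm : ‖P‖ = ‖u‖ * ‖v‖ := by
    show ‖(innerSL ℂ v).smulRight u‖ = ‖u‖ * ‖v‖
    rw [ContinuousLinearMap.norm_smulRight_apply, innerSL_apply_norm, mul_comm]
  have hcd' : ‖c‖ * ‖d‖ = Real.exp t := by
    have h := congrArg norm hcd
    rw [norm_mul, norm_mul, RCLike.norm_conj,
      Complex.norm_exp, norm_one] at h
    have hre : (Complex.I * ρ).re = -t := by simp [Complex.mul_re]; rfl
    rw [hre, Real.exp_neg] at h
    have he : (0:ℝ) < Real.exp t := Real.exp_pos _
    field_simp at h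
    simpa using h
  have huv : ‖u‖ * ‖v‖ = Real.exp t * A := by
    show ‖hu.toLp _‖ * ‖hv.toLp _‖ = _
    rw [norm_u, norm_v, hA1, hA2]
    rw [Real.sqrt_mul (sq_nonneg _), Real.sqrt_mul (sq_nonneg _),
      Real.sqrt_sq (norm_nonneg _), Real.sqrt_sq (norm_nonneg _)]
    calc ‖c‖ * Real.sqrt A * (‖d‖ * Real.sqrt A)
        = (‖c‖ * ‖d‖) * (Real.sqrt A * Real.sqrt A) := by ring
      _ = Real.exp t * A := by rw [hcd', Real.mul_self_sqrt hA0]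
  refine ⟨hPnorm, ?_, ?_⟩
  · rw [hPnorm, huv]
    calc 1/4 * Real.exp t / (1 + t) = Real.exp t * (1/(4*(1+t))) := by
          field_simp
      _ ≤ Real.exp t * A := mul_le_mul_of_nonneg_left hAlo (Real.exp_pos t).le
  · rw [hPnorm, huv]
    calc Real.exp t * A ≤ Real.exp t * (2/(1+t)) :=
          mul_le_mul_of_nonneg_left hAhi (Real.exp_pos t).le
      _ = 2 * Real.exp t / (1 + t) := by field_simp
end

section
/- Let Q⁰ and Q¹ be n×n complex matrices whose rows (grouped into blocks of sizes r₀,…,r_{n−1} with ∑ r_j = n) are given by Q^i having block-column entries B_k^i = (b_j^i · ε_k^j)_{j=0}^{n−1}, where b_j^i are r_j×1 vectors, and suppose for every j the r_j×2 matrix (b_j^0 b_j^1) has rank r_j (with 0 ≤ r_j ≤ 2). Then the n×2n matrix Q = [Q⁰ Q¹] has full rank n. -/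
open Complex Matrix Finset

/-- Block-structured matrix `Q = [Q⁰ Q¹]` with block-column entries
`B_k^i = (b_j^i · ε_k^j)_j`, where each `(b_j^0 b_j^1)` is an `r_j × 2` matrix of
rank `r_j` (`0 ≤ r_j ≤ 2`, `∑ r_j = n`), has full rank n. -/
theorem stmt7 (n : ℕ) (hn : 0 < n) (r : Fin n → ℕ) (hr2 : ∀ j, r j ≤ 2)
    (hsum : ∑ j, r j = n)
    (b : (j : Fin n) → Fin 2 → Fin (r j) → ℂ)
    (hrank : ∀ j, (Matrix.of fun (s : Fin (r j)) (i : Fin 2) => b j i s).rank = r j)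
    (Q : Matrix ((j : Fin n) × Fin (r j)) (Fin 2 × Fin n) ℂ)
    (hQ : ∀ (js : (j : Fin n) × Fin (r j)) (ik : Fin 2 × Fin n),
      Q js ik = b js.1 ik.1 js.2 *
        Complex.exp (2 * Real.pi * Complex.I * (ik.2 : ℕ) / n) ^ (js.1 : ℕ)) :
    Q.rank = n := by
  classical
  -- the roots of unity
  set ε : Fin n → ℂ := fun k => Complex.exp (2 * Real.pi * Complex.I * (k : ℕ) / n) with hε
  have hζ : IsPrimitiveRoot (Complex.exp (2 * Real.pi * Complex.I / n)) n :=
    Complex.isPrimitiveRoot_exp n hn.ne'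
  have hεpow : ∀ k : Fin n, ε k = Complex.exp (2 * Real.pi * Complex.I / n) ^ (k : ℕ) := by
    intro k
    have harg : 2 * (Real.pi : ℂ) * Complex.I * (k : ℕ) / n =
        ((k : ℕ) : ℂ) * (2 * (Real.pi : ℂ) * Complex.I / n) := by ring
    show Complex.exp (2 * Real.pi * Complex.I * (k : ℕ) / n) = _
    rw [harg, Complex.exp_nat_mul]
  have hεinj : Function.Injective ε := by
    intro k l hkl
    rw [hεpow, hεpow] at hkl
    exact Fin.ext (hζ.pow_inj k.is_lt l.is_lt hkl)
  -- rows of Q are linearly independent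
  have hli : LinearIndependent ℂ Q.row := by
    rw [Fintype.linearIndependent_iff]
    intro c hc js
    -- the combined coefficients
    set a : Fin 2 → Fin n → ℂ := fun i j => ∑ s : Fin (r j), c ⟨j, s⟩ * b j i s with ha
    have hc' : ∀ (i : Fin 2) (k : Fin n), ∑ j : Fin n, a i j * ε k ^ (j : ℕ) = 0 := by
      intro i k
      have := congrFun hc (i, k)
      simp only [Finset.sum_apply, Pi.smul_apply, smul_eq_mul, Pi.zero_apply] at this
      rw [← this, ← Finset.univ_sigma_univ, Finset.sum_sigma]
      apply Finset.sum_congr rfl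
      intro j _
      show a i j * ε k ^ (j : ℕ) = _
      rw [ha]
      show (∑ s : Fin (r j), c ⟨j, s⟩ * b j i s) * ε k ^ (j : ℕ) = _
      rw [Finset.sum_mul]
      apply Finset.sum_congr rfl
      intro s _
      rw [Matrix.row_apply, hQ ⟨j, s⟩ (i, k)]
      ring
    have ha0 : ∀ i : Fin 2, a i = 0 := by
      intro i
      exact Matrix.eq_zero_of_forall_index_sum_mul_pow_eq_zero hεinj (fun k => hc' i k)
    -- rows of each block are linearly independent
    obtain ⟨j, s⟩ := js
    have hbli : LinearIndependent ℂ (fun s : Fin (r j) => (fun i : Fin 2 => b j i s)) := by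
      rw [linearIndependent_iff_card_eq_finrank_span]
      have := (Matrix.rank_eq_finrank_span_row
        (Matrix.of fun (s : Fin (r j)) (i : Fin 2) => b j i s)).symm.trans (hrank j)
      rw [Fintype.card_fin, Set.finrank]
      exact this.symm
    have := Fintype.linearIndependent_iff.mp hbli (fun s => c ⟨j, s⟩) ?_ s
    · exact this
    · funext i
      have := congrFun (ha0 i) j
      simp only [ha, Pi.zero_apply] at this
      simpa [Finset.sum_apply] using this
  rw [hli.rank_matrix]
  simp [Fintype.card_sigma, hsum]
end

section
/- Let n > 2, ε_m = exp(2πim/n), ρ ∈ ℂ with 0 ≤ arg ρ < 2π/n, and ρⱼ ∈ ℂ with 0 ≤ arg ρⱼ < 2π/n. Then |ρ·ε₁ − ρⱼ| ≥ |Im ρ|. -/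
open Complex Real

/-- For `n > 2`, `ε₁ = exp(2πi/n)` and `ρ, ρⱼ` both in the sector
`{0 ≤ arg z < 2π/n}`, one has `|ρ·ε₁ − ρⱼ| ≥ |Im ρ|`. -/
theorem stmt11 (n : ℕ) (hn : 2 < n) (ρ ρj : ℂ)
    (hρ1 : 0 ≤ ρ.arg) (hρ2 : ρ.arg < 2 * Real.pi / n)
    (hρj1 : 0 ≤ ρj.arg) (hρj2 : ρj.arg < 2 * Real.pi / n) :
    |ρ.im| ≤ ‖ρ * Complex.exp (2 * Real.pi * Complex.I / n) - ρj‖ := by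
  have hn0 : (0:ℝ) < n := by positivity
  set θ : ℝ := 2 * Real.pi / n with hθdef
  have hθ0 : 0 < θ := by positivity
  have hθπ : θ < Real.pi := by
    rw [hθdef, div_lt_iff₀ hn0]
    have : (2:ℝ) < n := by exact_mod_cast hn
    nlinarith [Real.pi_pos]
  have hexp : (2 * (Real.pi:ℂ) * Complex.I / n) = (θ:ℂ) * Complex.I := by
    rw [hθdef]
    push_cast
    ring
  have him : 0 ≤ ρ.im := Complex.arg_nonneg_iff.mp hρ1
  set w : ℂ := ρj * Complex.exp (-(θ:ℂ) * Complex.I) with hw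
  have habs : ‖ρ * Complex.exp (2 * Real.pi * Complex.I / n) - ρj‖
      = ‖ρ - w‖ := by
    rw [hexp]
    have : ρ - w = (ρ * Complex.exp ((θ:ℂ) * Complex.I) - ρj)
        * Complex.exp (-(θ:ℂ) * Complex.I) := by
      rw [sub_mul, mul_assoc, ← Complex.exp_add]
      ring_nf
      simp [hw]
    rw [this, norm_mul]
    have : ‖Complex.exp (-(θ:ℂ) * Complex.I)‖ = 1 := by
      rw [show (-(θ:ℂ)) = ((-θ : ℝ) : ℂ) by push_cast; ring,
        Complex.norm_exp_ofReal_mul_I]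
    rw [this, mul_one]
  rw [habs]
  -- Im w ≤ 0
  have hwim : w.im ≤ 0 := by
    rcases eq_or_ne ρj 0 with h0 | h0
    · simp [hw, h0]
    · have hre : ρj.re = ‖ρj‖ * Real.cos ρj.arg := by
        rw [Complex.cos_arg h0]; field_simp [norm_ne_zero_iff.mpr h0]
      have him' : ρj.im = ‖ρj‖ * Real.sin ρj.arg := by
        rw [Complex.sin_arg]; field_simp [norm_ne_zero_iff.mpr h0]
      have : w.im = ‖ρj‖ * Real.sin (ρj.arg - θ) := by
        rw [hw, Complex.mul_im, show (-(θ:ℂ)) = ((-θ : ℝ) : ℂ) by push_cast; ring,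
          Complex.exp_ofReal_mul_I_re, Complex.exp_ofReal_mul_I_im, hre, him',
          Real.sin_sub, Real.cos_neg, Real.sin_neg]
        ring
      rw [this]
      have hs : 0 ≤ Real.sin (θ - ρj.arg) := by
        apply Real.sin_nonneg_of_nonneg_of_le_pi
        · linarith
        · linarith
      have : Real.sin (ρj.arg - θ) = - Real.sin (θ - ρj.arg) := by
        rw [← Real.sin_neg]; ring_nf
      rw [this]
      have := norm_nonneg ρj
      nlinarith
  have h1 : |ρ.im| = ρ.im := abs_of_nonneg him
  have h2 : ρ.im ≤ (ρ - w).im := by simp [Complex.sub_im]; linarith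
  calc |ρ.im| = ρ.im := h1
    _ ≤ (ρ - w).im := h2
    _ ≤ |(ρ - w).im| := le_abs_self _
    _ ≤ ‖ρ - w‖ := Complex.abs_im_le_norm _
end

section
/- Let P be the integral operator on L²(0,1) with kernel P(x,ξ) = ∑_{t,k=0}^{n−1} a_{tk}·z_k(x)·u_t(ξ), where (z_k) and (u_t) are families in L²(0,1), each almost orthogonal with constants independent of the parameter, and with ‖z_k‖² ≍ ‖u_t‖² ≍ 1/|ρ| for a parameter ρ with |ρ| ≥ R₀. Then ‖P‖ ≍ (1/|ρ|)·(∑_{t,k} |a_{tk}|²)^{1/2}, with constants independent of ρ and of the coefficients a_{tk}. -/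
open MeasureTheory Finset

/-- Bessel-type inequality for an almost-orthogonal family. -/
lemma besselAux {H : Type*} [NormedAddCommGroup H] [InnerProductSpace ℂ H]
    {n : ℕ} (u : Fin n → H) (c₄ B : ℝ) (hc₄ : 0 ≤ c₄) (hB : 0 ≤ B)
    (hu : ∀ c : Fin n → ℂ,
      ‖∑ t, c t • u t‖ ^ 2 ≤ c₄ * ∑ t, ‖c t‖ ^ 2 * ‖u t‖ ^ 2)
    (hub : ∀ t, ‖u t‖ ^ 2 ≤ B) (f : H) :
    ∑ t, ‖(inner ℂ (u t) f : ℂ)‖ ^ 2 ≤ c₄ * B * ‖f‖ ^ 2 := by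
  set S : ℝ := ∑ t, ‖(inner ℂ (u t) f : ℂ)‖ ^ 2 with hS
  have hS0 : 0 ≤ S := Finset.sum_nonneg fun t _ => by positivity
  set g : H := ∑ t, (inner ℂ (u t) f : ℂ) • u t with hg
  have hgf : (inner ℂ g f : ℂ) = (S : ℂ) := by
    rw [hg, sum_inner, hS]
    push_cast
    refine Finset.sum_congr rfl fun t _ => ?_
    rw [inner_smul_left, ← Complex.normSq_eq_conj_mul_self, ← Complex.sq_norm]
    push_cast; ring
  have hSle : S ≤ ‖g‖ * ‖f‖ := by
    have := norm_inner_le_norm (𝕜 := ℂ) g f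
    rw [hgf] at this
    simpa [abs_of_nonneg hS0] using this
  have hgn : ‖g‖ ^ 2 ≤ c₄ * B * S := by
    have h1 := hu fun t => (inner ℂ (u t) f : ℂ)
    refine h1.trans ?_
    have : ∑ t, ‖(inner ℂ (u t) f : ℂ)‖ ^ 2 * ‖u t‖ ^ 2 ≤ B * S := by
      rw [hS, Finset.mul_sum]
      refine Finset.sum_le_sum fun t _ => ?_
      rw [mul_comm B _]
      exact mul_le_mul_of_nonneg_left (hub t) (by positivity)
    calc c₄ * ∑ t, ‖(inner ℂ (u t) f : ℂ)‖ ^ 2 * ‖u t‖ ^ 2 ≤ c₄ * (B * S) :=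
          mul_le_mul_of_nonneg_left this hc₄
      _ = c₄ * B * S := by ring
  rcases eq_or_lt_of_le hS0 with h0 | h0
  · rw [← h0]; positivity
  · have h2 : S ^ 2 ≤ (c₄ * B * S) * ‖f‖ ^ 2 := by
      calc S ^ 2 ≤ (‖g‖ * ‖f‖) ^ 2 := by
            apply pow_le_pow_left₀ hS0 hSle
        _ = ‖g‖ ^ 2 * ‖f‖ ^ 2 := by ring
        _ ≤ (c₄ * B * S) * ‖f‖ ^ 2 := mul_le_mul_of_nonneg_right hgn (by positivity)
    have := le_of_mul_le_mul_right (by nlinarith : S * S ≤ (c₄ * B * ‖f‖ ^ 2) * S) h0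
    linarith

/-- Gram-type lower bound for an almost-orthogonal family bounded below. -/
lemma gramAux {H : Type*} [NormedAddCommGroup H] [InnerProductSpace ℂ H]
    {n : ℕ} (u : Fin n → H) (c₃ B : ℝ) (hc₃ : 0 ≤ c₃) (hB : 0 ≤ B)
    (hu : ∀ c : Fin n → ℂ,
      c₃ * ∑ t, ‖c t‖ ^ 2 * ‖u t‖ ^ 2 ≤ ‖∑ t, c t • u t‖ ^ 2)
    (hlb : ∀ t, B ≤ ‖u t‖ ^ 2) (w : Fin n → ℂ) :
    (c₃ * B) ^ 2 * ∑ t, ‖w t‖ ^ 2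
      ≤ ∑ s, ‖(inner ℂ (∑ t, w t • u t) (u s) : ℂ)‖ ^ 2 := by
  set g : H := ∑ t, w t • u t with hg
  set q : ℝ := ∑ t, ‖w t‖ ^ 2 with hq
  set T : ℝ := ∑ s, ‖(inner ℂ g (u s) : ℂ)‖ ^ 2 with hT
  have hq0 : 0 ≤ q := Finset.sum_nonneg fun t _ => by positivity
  have hT0 : 0 ≤ T := Finset.sum_nonneg fun t _ => by positivity
  rcases eq_or_lt_of_le hq0 with h0 | h0
  · rw [← h0]; simpa using hT0
  have hglb : c₃ * B * q ≤ ‖g‖ ^ 2 := by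
    refine le_trans ?_ (hu w)
    have : B * q ≤ ∑ t, ‖w t‖ ^ 2 * ‖u t‖ ^ 2 := by
      rw [hq, Finset.mul_sum]
      refine Finset.sum_le_sum fun t _ => ?_
      rw [mul_comm B _]
      exact mul_le_mul_of_nonneg_left (hlb t) (by positivity)
    nlinarith
  have hgub : (‖g‖ ^ 2) ^ 2 ≤ q * T := by
    have h1 : ‖(inner ℂ g g : ℂ)‖ = ‖g‖ ^ 2 := by
      rw [inner_self_eq_norm_sq_to_K (𝕜 := ℂ) g]
      simp [abs_of_nonneg (norm_nonneg g)]
    have h2 : (inner ℂ g g : ℂ) = ∑ t, w t * (inner ℂ g (u t) : ℂ) := by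
      conv_lhs => rw [show (inner ℂ g g : ℂ) = inner ℂ g (∑ t, w t • u t) from by rw [← hg]]
      rw [inner_sum]
      exact Finset.sum_congr rfl fun t _ => by rw [inner_smul_right]
    have h3 : ‖(inner ℂ g g : ℂ)‖
        ≤ ∑ t, ‖w t‖ * ‖(inner ℂ g (u t) : ℂ)‖ := by
      rw [h2]
      refine le_trans (norm_sum_le _ _) (le_of_eq ?_)
      exact Finset.sum_congr rfl fun t _ => by rw [norm_mul]
    have h4 : (∑ t, ‖w t‖ * ‖(inner ℂ g (u t) : ℂ)‖) ^ 2 ≤ q * T :=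
      Finset.sum_mul_sq_le_sq_mul_sq _ _ _
    calc (‖g‖ ^ 2) ^ 2 = (‖(inner ℂ g g : ℂ)‖) ^ 2 := by rw [h1]
      _ ≤ (∑ t, ‖w t‖ * ‖(inner ℂ g (u t) : ℂ)‖) ^ 2 :=
          pow_le_pow_left₀ (by positivity) h3 2
      _ ≤ q * T := h4
  have key : (c₃ * B) ^ 2 * q * q ≤ T * q := by
    nlinarith [pow_le_pow_left₀ (by positivity : (0:ℝ) ≤ c₃ * B * q) hglb 2]
  exact le_of_mul_le_mul_right key h0

set_option maxHeartbeats 1000000 in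
/-- For the finite-rank operator `P f = ∑_{t,k} a_{tk}·(f,u_t)·z_k` on L²(0,1)
(the integral operator with kernel `∑ a_{tk} z_k(x) u_t(ξ)`), where the families
`(z_k)`, `(u_t)` are almost orthogonal with fixed constants and
`‖z_k‖² ≍ ‖u_t‖² ≍ 1/|ρ|` for `|ρ| ≥ R₀`, one has
`‖P‖² ≍ (1/|ρ|²)·∑_{t,k}|a_{tk}|²` with constants independent of ρ and of a. -/
theorem stmt19 (n : ℕ) (R₀ c₁ c₂ c₃ c₄ k₁ k₂ : ℝ)
    (hR₀ : 0 < R₀) (hc₁ : 0 < c₁) (hc₁₂ : c₁ ≤ c₂) (hc₃ : 0 < c₃) (hc₃₄ : c₃ ≤ c₄)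
    (hk₁ : 0 < k₁) (hk₁₂ : k₁ ≤ k₂) :
    ∃ C₁ C₂ : ℝ, 0 < C₁ ∧ 0 < C₂ ∧
      ∀ (ρ : ℂ), R₀ ≤ ‖ρ‖ →
      ∀ (z u : Fin n → Lp ℂ 2 (volume.restrict (Set.Ioo (0:ℝ) 1)))
        (a : Fin n → Fin n → ℂ),
        (∀ c : Fin n → ℂ,
          c₁ * ∑ k, ‖c k‖ ^ 2 * ‖z k‖ ^ 2 ≤ ‖∑ k, c k • z k‖ ^ 2 ∧
          ‖∑ k, c k • z k‖ ^ 2 ≤ c₂ * ∑ k, ‖c k‖ ^ 2 * ‖z k‖ ^ 2) →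
        (∀ c : Fin n → ℂ,
          c₃ * ∑ t, ‖c t‖ ^ 2 * ‖u t‖ ^ 2 ≤ ‖∑ t, c t • u t‖ ^ 2 ∧
          ‖∑ t, c t • u t‖ ^ 2 ≤ c₄ * ∑ t, ‖c t‖ ^ 2 * ‖u t‖ ^ 2) →
        (∀ k, k₁ / ‖ρ‖ ≤ ‖z k‖ ^ 2 ∧ ‖z k‖ ^ 2 ≤ k₂ / ‖ρ‖) →
        (∀ t, k₁ / ‖ρ‖ ≤ ‖u t‖ ^ 2 ∧ ‖u t‖ ^ 2 ≤ k₂ / ‖ρ‖) →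
        let P := ∑ t, ∑ k, a t k • ((innerSL ℂ (u t)).smulRight (z k))
        C₁ * (∑ t, ∑ k, ‖a t k‖ ^ 2) / ‖ρ‖ ^ 2 ≤ ‖P‖ ^ 2 ∧
          ‖P‖ ^ 2 ≤ C₂ * (∑ t, ∑ k, ‖a t k‖ ^ 2) / ‖ρ‖ ^ 2 := by
  have hk₂ : 0 < k₂ := lt_of_lt_of_le hk₁ hk₁₂
  have hc₂ : 0 < c₂ := lt_of_lt_of_le hc₁ hc₁₂
  have hc₄ : 0 < c₄ := lt_of_lt_of_le hc₃ hc₃₄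
  refine ⟨c₁ * c₃ ^ 2 * k₁ ^ 3 / ((n + 1) * k₂), c₂ * c₄ * k₂ ^ 2, by positivity, by positivity,
    fun ρ hρ z u a hz hu hzn hun => ?_⟩
  intro P
  have hPdef : P = ∑ t, ∑ k, a t k • ((innerSL ℂ (u t)).smulRight (z k)) := rfl
  clear_value P
  set r : ℝ := ‖ρ‖ with hrdef
  have hr : 0 < r := lt_of_lt_of_le hR₀ hρ
  clear_value r
  set A : ℝ := ∑ t, ∑ k, ‖a t k‖ ^ 2 with hA
  clear_value A
  have hA0 : 0 ≤ A := by
    rw [hA]; exact Finset.sum_nonneg fun t _ => Finset.sum_nonneg fun k _ => by positivity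
  -- representation of P f
  have hPf : ∀ f, P f = ∑ k, (∑ t, a t k * (inner ℂ (u t) f : ℂ)) • z k := by
    intro f
    rw [hPdef]
    simp only [ContinuousLinearMap.sum_apply, ContinuousLinearMap.smul_apply,
      ContinuousLinearMap.smulRight_apply, innerSL_apply_apply]
    rw [Finset.sum_comm]
    refine Finset.sum_congr rfl fun k _ => ?_
    rw [Finset.sum_smul]
    exact Finset.sum_congr rfl fun t _ => smul_smul _ _ _
  -- Upper bound
  have hub : ∀ f, ‖P f‖ ^ 2 ≤ c₂ * c₄ * k₂ ^ 2 * A / r ^ 2 * ‖f‖ ^ 2 := by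
    intro f
    set S : ℝ := ∑ t, ‖(inner ℂ (u t) f : ℂ)‖ ^ 2 with hSdef
    clear_value S
    have hS0 : 0 ≤ S := by
      rw [hSdef]; exact Finset.sum_nonneg fun t _ => by positivity
    have hbes : S ≤ c₄ * (k₂ / r) * ‖f‖ ^ 2 := by
      rw [hSdef]
      exact besselAux u c₄ (k₂ / r) hc₄.le (by positivity) (fun c => (hu c).2)
        (fun t => (hun t).2) f
    have hd : ∀ k, ‖∑ t, a t k * (inner ℂ (u t) f : ℂ)‖ ^ 2
        ≤ (∑ t, ‖a t k‖ ^ 2) * S := by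
      intro k
      have h2 : ‖∑ t, a t k * (inner ℂ (u t) f : ℂ)‖
          ≤ ∑ t, ‖a t k‖ * ‖(inner ℂ (u t) f : ℂ)‖ :=
        le_trans (norm_sum_le _ _)
          (le_of_eq (Finset.sum_congr rfl fun t _ => norm_mul _ _))
      calc ‖∑ t, a t k * (inner ℂ (u t) f : ℂ)‖ ^ 2
          ≤ (∑ t, ‖a t k‖ * ‖(inner ℂ (u t) f : ℂ)‖) ^ 2 :=
            pow_le_pow_left₀ (by positivity) h2 2
        _ ≤ (∑ t, ‖a t k‖ ^ 2) * S := by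
            rw [hSdef]; exact Finset.sum_mul_sq_le_sq_mul_sq _ _ _
    rw [hPf f]
    refine le_trans (hz fun k => ∑ t, a t k * (inner ℂ (u t) f : ℂ)).2 ?_
    have step : ∑ k, ‖∑ t, a t k * (inner ℂ (u t) f : ℂ)‖ ^ 2 * ‖z k‖ ^ 2
        ≤ (k₂ / r) * (A * S) := by
      have h3 : ∀ k ∈ Finset.univ,
          ‖∑ t, a t k * (inner ℂ (u t) f : ℂ)‖ ^ 2 * ‖z k‖ ^ 2
          ≤ ((∑ t, ‖a t k‖ ^ 2) * S) * (k₂ / r) := fun k _ =>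
        mul_le_mul (hd k) (hzn k).2 (sq_nonneg _) (by positivity)
      refine (Finset.sum_le_sum h3).trans (le_of_eq ?_)
      rw [← Finset.sum_mul, ← Finset.sum_mul, hA, Finset.sum_comm]
      ring
    calc c₂ * ∑ k, ‖∑ t, a t k * (inner ℂ (u t) f : ℂ)‖ ^ 2 * ‖z k‖ ^ 2
        ≤ c₂ * ((k₂ / r) * (A * S)) := mul_le_mul_of_nonneg_left step hc₂.le
      _ ≤ c₂ * ((k₂ / r) * (A * (c₄ * (k₂ / r) * ‖f‖ ^ 2))) := by
          have : A * S ≤ A * (c₄ * (k₂ / r) * ‖f‖ ^ 2) :=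
            mul_le_mul_of_nonneg_left hbes hA0
          have h4 : (k₂ / r) * (A * S) ≤ (k₂ / r) * (A * (c₄ * (k₂ / r) * ‖f‖ ^ 2)) :=
            mul_le_mul_of_nonneg_left this (by positivity)
          exact mul_le_mul_of_nonneg_left h4 hc₂.le
      _ = c₂ * c₄ * k₂ ^ 2 * A / r ^ 2 * ‖f‖ ^ 2 := by
          field_simp
  constructor
  · -- lower bound
    rcases eq_or_lt_of_le hA0 with hA0' | hApos
    · rw [← hA0', mul_zero, zero_div]
      exact sq_nonneg _
    have hn : 0 < n := by
      rcases Nat.eq_zero_or_pos n with h | h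
      · exfalso; subst h; rw [hA] at hApos; simp at hApos
      · exact h
    -- coefficient vectors
    have hgk : ∀ (k : Fin n) (f : Lp ℂ 2 (volume.restrict (Set.Ioo (0:ℝ) 1))),
        (inner ℂ (∑ t, (starRingEnd ℂ (a t k)) • u t) f : ℂ)
          = ∑ t, a t k * (inner ℂ (u t) f : ℂ) := by
      intro k f
      rw [sum_inner]
      exact Finset.sum_congr rfl fun t _ => by rw [inner_smul_left]; simp
    have hTk : ∀ k : Fin n, (c₃ * (k₁ / r)) ^ 2 * (∑ t, ‖a t k‖ ^ 2)
        ≤ ∑ s, ‖∑ t, a t k * (inner ℂ (u t) (u s) : ℂ)‖ ^ 2 := by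
      intro k
      have := gramAux u c₃ (k₁ / r) hc₃.le (by positivity) (fun c => (hu c).1)
        (fun t => (hun t).1) (fun t => starRingEnd ℂ (a t k))
      simp only [Complex.norm_conj, hgk] at this
      exact this
    -- sum over k and pigeonhole
    have hAc : ∑ k : Fin n, ∑ t : Fin n, ‖a t k‖ ^ 2 = A := by
      rw [hA]; exact Finset.sum_comm
    have hsum0 : (c₃ * (k₁ / r)) ^ 2 * A
        ≤ ∑ k, ∑ s, ‖∑ t, a t k * (inner ℂ (u t) (u s) : ℂ)‖ ^ 2 := by
      rw [← hAc, Finset.mul_sum]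
      exact Finset.sum_le_sum fun k _ => hTk k
    have hsum : (c₃ * (k₁ / r)) ^ 2 * A
        ≤ ∑ s, ∑ k, ‖∑ t, a t k * (inner ℂ (u t) (u s) : ℂ)‖ ^ 2 :=
      hsum0.trans_eq Finset.sum_comm
    have hpig : ∃ s : Fin n, (c₃ * (k₁ / r)) ^ 2 * A / n
        ≤ ∑ k, ‖∑ t, a t k * (inner ℂ (u t) (u s) : ℂ)‖ ^ 2 := by
      have hne : (Finset.univ : Finset (Fin n)).Nonempty := by
        simpa [Finset.univ_nonempty_iff] using Fin.pos_iff_nonempty.mp hn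
      have hconst : ∑ _s : Fin n, (c₃ * (k₁ / r)) ^ 2 * A / n = (c₃ * (k₁ / r)) ^ 2 * A := by
        rw [Finset.sum_const, Finset.card_univ, Fintype.card_fin, nsmul_eq_mul]
        field_simp
      obtain ⟨s, _, hs⟩ := Finset.exists_le_of_sum_le
        (f := fun _ : Fin n => (c₃ * (k₁ / r)) ^ 2 * A / n)
        (g := fun s => ∑ k, ‖∑ t, a t k * (inner ℂ (u t) (u s) : ℂ)‖ ^ 2)
        hne (by rw [hconst]; exact hsum)
      exact ⟨s, hs⟩
    obtain ⟨s, hs⟩ := hpig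
    set f := u s with hf
    clear_value f
    set L : ℝ := ∑ k, ‖∑ t, a t k * (inner ℂ (u t) f : ℂ)‖ ^ 2 with hL
    clear_value L
    have hL0 : 0 ≤ L := by
      rw [hL]; exact Finset.sum_nonneg fun k _ => by positivity
    have hPfl : c₁ * ((k₁ / r) * L) ≤ ‖P f‖ ^ 2 := by
      rw [hPf f]
      refine le_trans ?_ (hz fun k => ∑ t, a t k * (inner ℂ (u t) f : ℂ)).1
      have : (k₁ / r) * L ≤ ∑ k, ‖∑ t, a t k * (inner ℂ (u t) f : ℂ)‖ ^ 2 * ‖z k‖ ^ 2 := by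
        rw [hL, Finset.mul_sum]
        refine Finset.sum_le_sum fun k _ => ?_
        rw [mul_comm (k₁ / r) _]
        exact mul_le_mul_of_nonneg_left (hzn k).1 (by positivity)
      exact mul_le_mul_of_nonneg_left this hc₁.le
    have hfub : ‖f‖ ^ 2 ≤ k₂ / r := by rw [hf]; exact (hun s).2
    have hop : ‖P f‖ ^ 2 ≤ ‖P‖ ^ 2 * ‖f‖ ^ 2 := by
      have := P.le_opNorm f
      nlinarith [norm_nonneg (P f), norm_nonneg P, norm_nonneg f]
    have hchain : c₁ * ((k₁ / r) * L) ≤ ‖P‖ ^ 2 * (k₂ / r) := by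
      refine le_trans hPfl (le_trans hop ?_)
      exact mul_le_mul_of_nonneg_left hfub (sq_nonneg _)
    have hPlow : c₁ * k₁ * L / k₂ ≤ ‖P‖ ^ 2 := by
      rw [div_le_iff₀ hk₂]
      have h6 : c₁ * k₁ * L = (c₁ * ((k₁ / r) * L)) * r := by field_simp
      have h7 : ‖P‖ ^ 2 * (k₂ / r) * r = ‖P‖ ^ 2 * k₂ := by
        rw [mul_assoc, div_mul_cancel₀ _ hr.ne']
      calc c₁ * k₁ * L = (c₁ * ((k₁ / r) * L)) * r := h6
        _ ≤ ‖P‖ ^ 2 * (k₂ / r) * r := mul_le_mul_of_nonneg_right hchain hr.le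
        _ = ‖P‖ ^ 2 * k₂ := h7
    refine le_trans ?_ hPlow
    have hLlow : (c₃ * (k₁ / r)) ^ 2 * A / n ≤ L := hs
    have hnn : (0:ℝ) < n := by exact_mod_cast hn
    calc c₁ * c₃ ^ 2 * k₁ ^ 3 / ((n + 1) * k₂) * A / r ^ 2
        ≤ c₁ * c₃ ^ 2 * k₁ ^ 3 / (n * k₂) * A / r ^ 2 := by
          gcongr
          · linarith
      _ = c₁ * k₁ * ((c₃ * (k₁ / r)) ^ 2 * A / n) / k₂ := by field_simp
      _ ≤ c₁ * k₁ * L / k₂ := by gcongr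
  · -- upper bound
    have hPnorm : ‖P‖ ≤ Real.sqrt (c₂ * c₄ * k₂ ^ 2 * A / r ^ 2) := by
      refine P.opNorm_le_bound (Real.sqrt_nonneg _) fun f => ?_
      calc ‖P f‖ = Real.sqrt (‖P f‖ ^ 2) := (Real.sqrt_sq (norm_nonneg _)).symm
        _ ≤ Real.sqrt (c₂ * c₄ * k₂ ^ 2 * A / r ^ 2 * ‖f‖ ^ 2) := Real.sqrt_le_sqrt (hub f)
        _ = Real.sqrt (c₂ * c₄ * k₂ ^ 2 * A / r ^ 2) * ‖f‖ := by
            rw [Real.sqrt_mul (by positivity), Real.sqrt_sq (norm_nonneg f)]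
    calc ‖P‖ ^ 2 ≤ Real.sqrt (c₂ * c₄ * k₂ ^ 2 * A / r ^ 2) ^ 2 :=
          pow_le_pow_left₀ (norm_nonneg _) hPnorm 2
      _ = c₂ * c₄ * k₂ ^ 2 * A / r ^ 2 := Real.sq_sqrt (by positivity)
end
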